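/- Let L_0, R_0 be languages with no infinite alternating subsequence tower between them, and let the sequence L_k, R_k stabilize at L_B = R_B = ∅. Define S_k = up(R_0 \ R_k) \ up(L_0 \ L_k) and S = the union of S_k for k = 1,…,B. Then L_0 ∩ S = ∅ and R_0 ⊆ S. -/
import Mathlib


/-- An infinite alternating subsequence tower between `K` and `L`. -/
def InfSubTower {α : Type*} (K L : Set (List α)) (w : ℕ → List α) : Prop :=
  w 0 ∈ K ∪ L ∧
    ∀ i, (w i).Sublist (w (i + 1)) ∧
      (w i ∈ K → w (i + 1) ∈ L) ∧ (w i ∈ L → w (i + 1) ∈ K)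

/-- The upward closure of a language: all supersequences of its strings. -/
def up {α : Type*} (K : Set (List α)) : Set (List α) :=
  {w | ∃ v ∈ K, v.Sublist w}

theorem separator_separates {α : Type*}
    (L R : ℕ → Set (List α)) (B : ℕ)
    (hL : ∀ k, L (k + 1) = {w ∈ L k | ∃ u ∈ R k, w.Sublist u})
    (hR : ∀ k, R (k + 1) = {w ∈ R k | ∃ u ∈ L (k + 1), w.Sublist u})
    (htower : ¬ ∃ t : ℕ → List α, InfSubTower (L 0) (R 0) t)
    (hLB : L B = ∅) (hRB : R B = ∅) :
    L 0 ∩ (⋃ k ∈ Finset.Icc 1 B, up (R 0 \ R k) \ up (L 0 \ L k)) = ∅ ∧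
      R 0 ⊆ ⋃ k ∈ Finset.Icc 1 B, up (R 0 \ R k) \ up (L 0 \ L k) := by
  have hLmono : ∀ k, L (k + 1) ⊆ L k := fun k => by rw [hL k]; exact fun w hw => hw.1
  have hRmono : ∀ k, R (k + 1) ⊆ R k := fun k => by rw [hR k]; exact fun w hw => hw.1
  have hLanti : Antitone L := antitone_nat_of_succ_le hLmono
  have hRanti : Antitone R := antitone_nat_of_succ_le hRmono
  -- if an element is in the 0-th set but not the k-th, it drops at some step
  have hdropR : ∀ k v, v ∈ R 0 → v ∉ R k → ∃ j, j < k ∧ v ∈ R j ∧ v ∉ R (j + 1) := by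
    intro k
    induction k with
    | zero => intro v h0 h; exact absurd h0 h
    | succ k ih =>
      intro v h0 h
      by_cases hk : v ∈ R k
      · exact ⟨k, Nat.lt_succ_self k, hk, h⟩
      · obtain ⟨j, hj, h1, h2⟩ := ih v h0 hk
        exact ⟨j, hj.trans (Nat.lt_succ_self k), h1, h2⟩
  have hdropL : ∀ k v, v ∈ L 0 → v ∉ L k → ∃ j, j < k ∧ v ∈ L j ∧ v ∉ L (j + 1) := by
    intro k
    induction k with
    | zero => intro v h0 h; exact absurd h0 h
    | succ k ih =>
      intro v h0 h
      by_cases hk : v ∈ L k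
      · exact ⟨k, Nat.lt_succ_self k, hk, h⟩
      · obtain ⟨j, hj, h1, h2⟩ := ih v h0 hk
        exact ⟨j, hj.trans (Nat.lt_succ_self k), h1, h2⟩
  have key1 : ∀ k v w, v ∈ R 0 → v ∉ R k → v.Sublist w → w ∈ L k → False := by
    intro k v w hv0 hvk hsub hw
    obtain ⟨j, hj, h1, h2⟩ := hdropR k v hv0 hvk
    rw [hR j] at h2
    exact h2 ⟨h1, w, hLanti (by omega : j + 1 ≤ k) hw, hsub⟩
  have key2 : ∀ k v w, v ∈ L 0 → v ∉ L k → v.Sublist w → (∀ j, j < k → w ∈ R j) → False := by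
    intro k v w hv0 hvk hsub hw
    obtain ⟨j, hj, h1, h2⟩ := hdropL k v hv0 hvk
    rw [hL j] at h2
    exact h2 ⟨h1, w, hw j hj, hsub⟩
  constructor
  · rw [Set.eq_empty_iff_forall_notMem]
    rintro w ⟨hwL, hwS⟩
    simp only [Set.mem_iUnion] at hwS
    obtain ⟨k, hk, hup, hnup⟩ := hwS
    have hwLk : w ∈ L k := by
      by_contra h
      exact hnup ⟨w, ⟨hwL, h⟩, List.Sublist.refl w⟩
    obtain ⟨v, ⟨hv0, hvk⟩, hsub⟩ := hup
    exact key1 k v w hv0 hvk hsub hwLk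
  · intro w hw
    have hB : w ∉ R B := by rw [hRB]; exact Set.notMem_empty w
    obtain ⟨j, hj, h1, h2⟩ := hdropR B w hw hB
    simp only [Set.mem_iUnion]
    refine ⟨j + 1, by simp only [Finset.mem_Icc]; omega, ⟨w, ⟨hw, h2⟩, List.Sublist.refl w⟩, ?_⟩
    rintro ⟨v, ⟨hv0, hvk⟩, hsub⟩
    exact key2 (j + 1) v w hv0 hvk hsub (fun j' hj' => hRanti (by omega : j' ≤ j) h1)
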